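/- Let N, s, I be positive integers with I = ⌊N/s⌋. Suppose s users, each with cache of size M·F bits, together with I broadcast messages of sizes R₁F, …, R_IF bits, can jointly reconstruct s·I distinct files each of F bits (where for each i, the i-th message together with the caches yields a distinct set of s files). Then, in the limit F → ∞, the rates satisfy ∑_{i=1}^I Rᵢ ≥ s·(I − M)⁺, where (x)⁺ = max{x, 0}. Formally in information-theoretic terms: if H of the cache contents is at most sMF and the total entropy of the messages is at most F·∑Rᵢ, and the sI files (total entropy sIF) are a function of caches and messages up to o(F), then sMF + F∑Rᵢ ≥ sIF − o(F). -/

import Mathlib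

/-- Cut-set bound: if cache contents (at most `2^(sMF)` possibilities) together with `I`
messages (at most `2^(F∑Rᵢ)` possibilities) determine `sI` files of `F` bits each, then
`∑ Rᵢ ≥ s(I − M)⁺`. -/
theorem cutset_bound (N s I F : ℕ) (hs : 0 < s) (hsN : s ≤ N) (hI : I = N / s)
    (hF : 0 < F) (M : ℝ) (hM : 0 ≤ M) (R : ℕ → ℝ) (hR : ∀ i, 0 ≤ R i)
    (C Msg : Type*) [Fintype C] [Fintype Msg]
    (hC : (Fintype.card C : ℝ) ≤ 2 ^ ((s : ℝ) * M * F))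
    (hMsg : (Fintype.card Msg : ℝ) ≤ 2 ^ ((F : ℝ) * ∑ i ∈ Finset.range I, R i))
    (dec : C × Msg → (Fin (s * I) → Fin (2 ^ F)))
    (hdec : Function.Surjective dec) :
    (s : ℝ) * max ((I : ℝ) - M) 0 ≤ ∑ i ∈ Finset.range I, R i := by
  have hRsum : 0 ≤ ∑ i ∈ Finset.range I, R i :=
    Finset.sum_nonneg fun i _ => hR i
  rcases le_or_gt ((I : ℝ) - M) 0 with h | h
  · rw [max_eq_right h, mul_zero]; exact hRsum
  rw [max_eq_left h.le]
  -- cardinality bound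
  have hcard : Fintype.card (Fin (s * I) → Fin (2 ^ F)) ≤ Fintype.card (C × Msg) :=
    Fintype.card_le_of_surjective dec hdec
  have hcard2 : ((Fintype.card (Fin (s * I) → Fin (2 ^ F)) : ℕ) : ℝ) ≤
      ((Fintype.card (C × Msg) : ℕ) : ℝ) := Nat.cast_le.mpr hcard
  simp only [Fintype.card_fun, Fintype.card_fin, Fintype.card_prod] at hcard2
  have hcard' : ((2 : ℝ) ^ (F * (s * I)) : ℝ) ≤ (Fintype.card C : ℝ) * Fintype.card Msg := by
    rw [← pow_mul] at hcard2; push_cast at hcard2; linarith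
  have hCnn : (0 : ℝ) ≤ (Fintype.card C : ℝ) := Nat.cast_nonneg _
  have hMnn : (0 : ℝ) ≤ (Fintype.card Msg : ℝ) := Nat.cast_nonneg _
  have hmul : (Fintype.card C : ℝ) * Fintype.card Msg ≤
      2 ^ ((s : ℝ) * M * F) * 2 ^ ((F : ℝ) * ∑ i ∈ Finset.range I, R i) :=
    mul_le_mul hC hMsg hMnn (le_of_lt (by positivity))
  have key : (2 : ℝ) ^ ((F : ℝ) * (s * I)) ≤
      2 ^ ((s : ℝ) * M * F + (F : ℝ) * ∑ i ∈ Finset.range I, R i) := by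
    rw [Real.rpow_add (by norm_num)]
    refine le_trans ?_ (le_trans hmul le_rfl)
    have : ((2 : ℝ) ^ (F * (s * I)) : ℝ) = (2 : ℝ) ^ ((F : ℝ) * (s * I)) := by
      rw [← Real.rpow_natCast 2 (F * (s * I))]
      push_cast; ring_nf
    linarith [hcard', this]
  have hle : (F : ℝ) * (s * I) ≤ (s : ℝ) * M * F + (F : ℝ) * ∑ i ∈ Finset.range I, R i :=
    (Real.rpow_le_rpow_left_iff (by norm_num)).mp key
  have hFpos : (0 : ℝ) < F := by exact_mod_cast hF
  rw [mul_sub]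
  nlinarith [hle, hFpos]
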